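/- Let G be a group with finite generating set X that is a limit of hyperbolic groups. Then: (a) for every k ∈ ℕ there exists M = M(k) ∈ ℕ such that f_{G,X}(k,m,n) ≤ 400·⌈n/m⌉ for all m ≥ M and all n ∈ ℕ; (b) if, moreover, G is well-approximated by hyperbolic groups, then f_{G,X}(k,m,n) ∼ n/m. -/

import Mathlib

open Function

namespace IsoSpecPaper

variable {ι : Type*} {G : Type*} [Group G]

/-- The (reduced) length of an element of a free group. -/
noncomputable def wnorm (w : FreeGroup ι) : ℕ :=
  @FreeGroup.norm ι (Classical.decEq ι) w

/-- `triv φ k` : the set of words of length at most `k` in the generators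
(and their inverses) representing the identity of `G` under the marking `φ`. -/
noncomputable def triv (φ : FreeGroup ι →* G) (k : ℕ) : Set (FreeGroup ι) :=
  {w | wnorm w ≤ k ∧ φ w = 1}

/-- `AreaLe R w l` : `w` is a product of `l` conjugates of elements of `R` or
their inverses in the free group. -/
def AreaLe (R : Set (FreeGroup ι)) (w : FreeGroup ι) (l : ℕ) : Prop :=
  ∃ L : List (FreeGroup ι × FreeGroup ι), L.length = l ∧
    (∀ p ∈ L, p.2 ∈ R ∨ p.2⁻¹ ∈ R) ∧
    w = (L.map fun p => p.1⁻¹ * p.2 * p.1).prod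

/-- The area of `w` with respect to the set of relators `R`. -/
noncomputable def area (R : Set (FreeGroup ι)) (w : FreeGroup ι) : ℕ :=
  sInf {l | AreaLe R w l}

/-- The isoperimetric spectrum of the marked group `(G, φ)`:
`isoSpec φ k m n = max { area_{S_m}(w) : w ∈ ⟪S_k⟫, ‖w‖ ≤ n }`. -/
noncomputable def isoSpec (φ : FreeGroup ι →* G) (k m n : ℕ) : ℕ :=
  sSup (area (triv φ m) '' {w | w ∈ Subgroup.normalClosure (triv φ k) ∧ wnorm w ≤ n})

/-- The real-valued isoperimetric spectrum. -/
noncomputable def isoSpecR (φ : FreeGroup ι →* G) : ℕ → ℕ → ℕ → ℝ :=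
  fun k m n => (isoSpec φ k m n : ℝ)

/-- The Dehn function of the presentation with relators `R`. -/
noncomputable def dehn (R : Set (FreeGroup ι)) (n : ℕ) : ℕ :=
  sSup (area R '' {w | w ∈ Subgroup.normalClosure R ∧ wnorm w ≤ n})

/-- The quasi-order `f ≼ g` on functions of triples `(k,m,n)` of positive integers
with `m ≥ k`. -/
def SpecLE (f g : ℕ → ℕ → ℕ → ℝ) : Prop :=
  ∃ C : ℕ, 0 < C ∧ ∀ k m n : ℕ, 0 < k → 0 < m → 0 < n → C * k ≤ m →
    f k (C * m) n ≤ C * g (C * k) m (C * n) + C * (n : ℝ) / m + C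

/-- Equivalence of isoperimetric functions: `f ∼ g`. -/
def SpecEquiv (f g : ℕ → ℕ → ℕ → ℝ) : Prop := SpecLE f g ∧ SpecLE g f

/-- The linear spectrum `(k,m,n) ↦ n/m`. -/
noncomputable def linSpec : ℕ → ℕ → ℕ → ℝ := fun _ m n => (n : ℝ) / m

/-- The word length of `g ∈ G` with respect to the marking `φ`. -/
noncomputable def wlen (φ : FreeGroup ι →* G) (g : G) : ℕ :=
  sInf {n | ∃ w : FreeGroup ι, wnorm w = n ∧ φ w = g}

/-- The word metric on `G` with respect to the marking `φ`. -/
noncomputable def wdist (φ : FreeGroup ι →* G) (g h : G) : ℕ := wlen φ (g⁻¹ * h)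

/-- Quasi-isometry of marked groups with respect to their word metrics. -/
noncomputable def QuasiIsometric {H : Type*} [Group H] {κ : Type*}
    (φ : FreeGroup ι →* G) (ψ : FreeGroup κ →* H) : Prop :=
  ∃ L : ℝ, 0 ≤ L ∧ ∃ (α : G → H) (β : H → G),
    (∀ x y : G, (wdist ψ (α x) (α y) : ℝ) ≤ L * wdist φ x y + L) ∧
    (∀ u v : H, (wdist φ (β u) (β v) : ℝ) ≤ L * wdist ψ u v + L) ∧
    (∀ t : H, (wdist ψ (α (β t)) t : ℝ) ≤ L) ∧
    (∀ s : G, (wdist φ (β (α s)) s : ℝ) ≤ L)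

/-- A (combinatorial) geodesic path of length `n` in the Cayley graph of `(G, φ)`:
consecutive vertices are at distance at most `1` and the endpoints are at
distance exactly `n`. -/
noncomputable def IsGeodesic (φ : FreeGroup ι →* G) {n : ℕ} (p : Fin (n + 1) → G) : Prop :=
  (∀ i : Fin n, wdist φ (p i.castSucc) (p i.succ) ≤ 1) ∧
  wdist φ (p 0) (p (Fin.last n)) = n

/-- Every vertex of the path `p` lies within distance `δ` of the set `A`. -/
noncomputable def ThinAt (φ : FreeGroup ι →* G) (δ : ℝ) {n : ℕ}
    (p : Fin (n + 1) → G) (A : Set G) : Prop :=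
  ∀ i, ∃ a ∈ A, (wdist φ (p i) a : ℝ) ≤ δ

/-- The Cayley graph of `(G, φ)` is `δ`-hyperbolic: every geodesic triangle is `δ`-thin. -/
noncomputable def HypConst (φ : FreeGroup ι →* G) (δ : ℝ) : Prop :=
  ∀ (n₁ n₂ n₃ : ℕ) (p : Fin (n₁ + 1) → G) (q : Fin (n₂ + 1) → G) (r : Fin (n₃ + 1) → G),
    IsGeodesic φ p → IsGeodesic φ q → IsGeodesic φ r →
    p (Fin.last n₁) = q 0 → q (Fin.last n₂) = r 0 → r (Fin.last n₃) = p 0 →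
    ThinAt φ δ p (Set.range q ∪ Set.range r) ∧
    ThinAt φ δ q (Set.range r ∪ Set.range p) ∧
    ThinAt φ δ r (Set.range p ∪ Set.range q)

/-- The marked group `(G, φ)` is hyperbolic. -/
noncomputable def IsHyperbolic (φ : FreeGroup ι →* G) : Prop :=
  ∃ δ : ℝ, 0 ≤ δ ∧ HypConst φ δ

/-- `G` (marked by `φ`) is a limit (direct limit) of hyperbolic groups. -/
noncomputable def LimitOfHyperbolic (φ : FreeGroup ι →* G) : Prop :=
  Surjective φ ∧ ∃ R : ℕ → Set (FreeGroup ι),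
    (∀ i j, i ≤ j → R i ⊆ R j) ∧
    φ.ker = Subgroup.normalClosure (⋃ i, R i) ∧
    ∀ i, IsHyperbolic (QuotientGroup.mk' (Subgroup.normalClosure (R i)))

/-- `G` (marked by `φ`) is well-approximated by hyperbolic groups. -/
noncomputable def WellApproximated (φ : FreeGroup ι →* G) : Prop :=
  Surjective φ ∧ ∃ R : ℕ → Set (FreeGroup ι),
    (∀ i j, i ≤ j → R i ⊆ R j) ∧
    φ.ker = Subgroup.normalClosure (⋃ i, R i) ∧
    (∀ i, IsHyperbolic (QuotientGroup.mk' (Subgroup.normalClosure (R i)))) ∧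
    ∃ C : ℕ, 0 < C ∧ ∀ i : ℕ, 0 < i →
      (∀ w : FreeGroup ι, wnorm w ≤ i → φ w = 1 →
        w ∈ Subgroup.normalClosure (R i)) ∧
      HypConst (QuotientGroup.mk' (Subgroup.normalClosure (R i))) ((C * i : ℕ) : ℝ)


section Aux

variable (ψ : FreeGroup ι →* G)

-- ## norm lemmas
lemma wnorm_one : wnorm (1 : FreeGroup ι) = 0 := rfl

lemma wnorm_inv (w : FreeGroup ι) : wnorm w⁻¹ = wnorm w := by
  letI : DecidableEq ι := Classical.decEq ι
  exact FreeGroup.norm_inv_eq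

lemma wnorm_mul_le (x y : FreeGroup ι) : wnorm (x * y) ≤ wnorm x + wnorm y := by
  letI : DecidableEq ι := Classical.decEq ι
  exact FreeGroup.norm_mul_le x y

lemma wnorm_eq_zero {w : FreeGroup ι} : wnorm w = 0 ↔ w = 1 := by
  letI : DecidableEq ι := Classical.decEq ι
  exact FreeGroup.norm_eq_zero

lemma wnorm_mk_le (L : List (ι × Bool)) : wnorm (FreeGroup.mk L) ≤ L.length := by
  letI : DecidableEq ι := Classical.decEq ι
  exact FreeGroup.norm_mk_le

-- ## wlen / wdist
variable (ψ : FreeGroup ι →* G)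

lemma wlen_le_wnorm {w : FreeGroup ι} {g : G} (h : ψ w = g) : wlen ψ g ≤ wnorm w :=
  Nat.sInf_le ⟨w, rfl, h⟩

lemma exists_wlen_word (hs : Surjective ψ) (g : G) :
    ∃ w, wnorm w = wlen ψ g ∧ ψ w = g := by
  obtain ⟨w, hw⟩ := hs g
  have h : {n | ∃ w : FreeGroup ι, wnorm w = n ∧ ψ w = g}.Nonempty := ⟨wnorm w, w, rfl, hw⟩
  exact Nat.sInf_mem h

lemma wdist_le_wnorm {g h : G} {w : FreeGroup ι} (hw : ψ w = g⁻¹ * h) :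
    wdist ψ g h ≤ wnorm w := wlen_le_wnorm ψ hw

lemma wdist_self (g : G) : wdist ψ g g = 0 :=
  Nat.le_zero.mp (by simpa [wnorm_one] using wdist_le_wnorm ψ (w := 1) (g := g) (h := g) (by simp))

lemma wlen_inv (g : G) : wlen ψ g⁻¹ = wlen ψ g := by
  unfold wlen
  congr 1
  ext n
  constructor
  · rintro ⟨w, h1, h2⟩
    exact ⟨w⁻¹, by rw [wnorm_inv, h1], by rw [map_inv, h2, inv_inv]⟩
  · rintro ⟨w, h1, h2⟩
    exact ⟨w⁻¹, by rw [wnorm_inv, h1], by rw [map_inv, h2]⟩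

lemma wdist_comm (g h : G) : wdist ψ g h = wdist ψ h g := by
  unfold wdist
  rw [← wlen_inv]
  congr 1
  group

lemma wdist_triangle (hs : Surjective ψ) (g x h : G) :
    wdist ψ g h ≤ wdist ψ g x + wdist ψ x h := by
  obtain ⟨u, hu1, hu2⟩ := exists_wlen_word ψ hs (g⁻¹ * x)
  obtain ⟨v, hv1, hv2⟩ := exists_wlen_word ψ hs (x⁻¹ * h)
  have huv : ψ (u * v) = g⁻¹ * h := by rw [map_mul, hu2, hv2]; group
  calc wdist ψ g h ≤ wnorm (u * v) := wdist_le_wnorm ψ huv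
    _ ≤ wnorm u + wnorm v := wnorm_mul_le u v
    _ = wdist ψ g x + wdist ψ x h := by rw [hu1, hv1]; rfl

lemma wdist_chain (hs : Surjective ψ) (g : ℕ → G) (N : ℕ)
    (hstep : ∀ i, i < N → wdist ψ (g i) (g (i + 1)) ≤ 1) :
    ∀ i c, i + c ≤ N → wdist ψ (g i) (g (i + c)) ≤ c := by
  intro i c
  induction c with
  | zero => intro _; simp [wdist_self]
  | succ c ih =>
    intro h
    have h1 : i + (c + 1) = (i + c) + 1 := by omega
    calc wdist ψ (g i) (g (i + (c + 1)))
        ≤ wdist ψ (g i) (g (i + c)) + wdist ψ (g (i + c)) (g (i + (c + 1))) :=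
          wdist_triangle ψ hs _ _ _
      _ ≤ c + 1 := by
          rw [h1]
          exact add_le_add (ih (by omega)) (hstep (i + c) (by omega))



lemma fin_chain (hs : Surjective ψ) {n : ℕ} {p : Fin (n + 1) → G}
    (hstep : ∀ i : Fin n, wdist ψ (p i.castSucc) (p i.succ) ≤ 1)
    (i j : Fin (n + 1)) (hij : i ≤ j) : wdist ψ (p i) (p j) ≤ (j : ℕ) - (i : ℕ) := by
  set q : ℕ → G := fun t => p ⟨min t n, by omega⟩ with hq
  have hqstep : ∀ t, t < n → wdist ψ (q t) (q (t + 1)) ≤ 1 := by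
    intro t ht
    have h := hstep ⟨t, ht⟩
    have e1 : q t = p (Fin.castSucc ⟨t, ht⟩) := by
      simp only [hq]; congr 1; exact Fin.ext (by simp [Fin.coe_castSucc]; omega)
    have e2 : q (t + 1) = p (Fin.succ ⟨t, ht⟩) := by
      simp only [hq]; congr 1; exact Fin.ext (by simp [Fin.val_succ]; omega)
    rw [e1, e2]; exact h
  have h := wdist_chain ψ hs q n hqstep (i : ℕ) ((j : ℕ) - (i : ℕ)) (by omega)
  have e1 : q (i : ℕ) = p i := by
    simp only [hq]; congr 1; exact Fin.ext (by simp; omega)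
  have e2 : q ((i : ℕ) + ((j : ℕ) - (i : ℕ))) = p j := by
    simp only [hq]; congr 1; exact Fin.ext (by simp; omega)
  rw [e1, e2] at h; exact h

lemma geodesic_pos (hs : Surjective ψ) {n : ℕ} {p : Fin (n + 1) → G}
    (hp : IsGeodesic ψ p) (i : Fin (n + 1)) :
    wdist ψ (p 0) (p i) = (i : ℕ) ∧ wdist ψ (p i) (p (Fin.last n)) + (i : ℕ) = n := by
  obtain ⟨hstep, hend⟩ := hp
  have h1 : wdist ψ (p 0) (p i) ≤ (i : ℕ) := by
    have := fin_chain ψ hs hstep 0 i (Fin.zero_le i)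
    simpa using this
  have h2 : wdist ψ (p i) (p (Fin.last n)) ≤ n - (i : ℕ) := by
    have := fin_chain ψ hs hstep i (Fin.last n) (Fin.le_last i)
    simpa using this
  have h3 := wdist_triangle ψ hs (p 0) (p i) (p (Fin.last n))
  rw [hend] at h3
  have h4 : (i : ℕ) ≤ n := by omega
  omega

lemma isGeodesic_rev {n : ℕ} {p : Fin (n + 1) → G} (hp : IsGeodesic ψ p) :
    IsGeodesic ψ (p ∘ Fin.rev) := by
  obtain ⟨hstep, hend⟩ := hp
  constructor
  · intro i
    have h := hstep i.rev
    simp only [Function.comp]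
    rw [Fin.rev_castSucc, Fin.rev_succ, wdist_comm]
    exact h
  · simp only [Function.comp]
    rw [Fin.rev_zero, Fin.rev_last, wdist_comm]
    exact hend

lemma exists_geodesic (hs : Surjective ψ) (g h : G) :
    ∃ p : Fin (wdist ψ g h + 1) → G, IsGeodesic ψ p ∧ p 0 = g ∧ p (Fin.last _) = h := by
  letI : DecidableEq ι := Classical.decEq ι
  obtain ⟨v, hv1, hv2⟩ := exists_wlen_word ψ hs (g⁻¹ * h)
  set d := wdist ψ g h with hd
  set L := FreeGroup.toWord v with hL
  have hLlen : L.length = d := hv1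
  refine ⟨fun i => g * ψ (FreeGroup.mk (L.take (i : ℕ))), ⟨?_, ?_⟩, ?_, ?_⟩
  · intro i
    have hmk : FreeGroup.mk (L.take ((i : ℕ) + 1)) =
        FreeGroup.mk (L.take (i : ℕ)) * FreeGroup.mk ((L[(i : ℕ)]?).toList) := by
      rw [List.take_succ, FreeGroup.mul_mk]
    have himg : ψ (FreeGroup.mk ((L[(i : ℕ)]?).toList)) =
        (g * ψ (FreeGroup.mk (L.take ((i.castSucc : Fin (d+1)) : ℕ))))⁻¹ *
        (g * ψ (FreeGroup.mk (L.take ((i.succ : Fin (d+1)) : ℕ)))) := by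
      rw [Fin.coe_castSucc, Fin.val_succ, hmk, map_mul]
      group
    refine le_trans (wdist_le_wnorm ψ himg) ?_
    refine le_trans (wnorm_mk_le _) ?_
    cases (L[(i : ℕ)]?) <;> simp
  · show wdist ψ (g * ψ (FreeGroup.mk (L.take ((0 : Fin (d+1)) : ℕ))))
        (g * ψ (FreeGroup.mk (L.take ((Fin.last d : Fin (d+1)) : ℕ)))) = d
    have e0 : (FreeGroup.mk (L.take ((0 : Fin (d+1)) : ℕ))) = (1 : FreeGroup ι) := by
      rw [Fin.val_zero, List.take_zero, ← FreeGroup.one_eq_mk]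
    have e1 : (FreeGroup.mk (L.take ((Fin.last d : Fin (d+1)) : ℕ))) = v := by
      rw [Fin.val_last, ← hLlen, List.take_length, hL, FreeGroup.mk_toWord]
    rw [e0, e1, map_one, mul_one, hv2]
    show wlen ψ ((g)⁻¹ * (g * (g⁻¹ * h))) = d
    rw [show (g)⁻¹ * (g * (g⁻¹ * h)) = g⁻¹ * h by group]
    exact rfl
  · show g * ψ (FreeGroup.mk (L.take ((0 : Fin (d+1)) : ℕ))) = g
    rw [Fin.val_zero, List.take_zero, ← FreeGroup.one_eq_mk, map_one, mul_one]
  · show g * ψ (FreeGroup.mk (L.take ((Fin.last d : Fin (d+1)) : ℕ))) = h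
    have e1 : (FreeGroup.mk (L.take ((Fin.last d : Fin (d+1)) : ℕ))) = v := by
      rw [Fin.val_last, ← hLlen, List.take_length, hL, FreeGroup.mk_toWord]
    rw [e1, hv2]; group



lemma taut_near {δ : ℝ} (hyp : HypConst ψ δ) (hs : Surjective ψ) {δ' s : ℕ}
    (hδ : δ ≤ (δ' : ℝ)) {x y z : G}
    (htaut : wdist ψ y x + wdist ψ x z ≤ wdist ψ y z + s)
    {D3 : ℕ} (σ : Fin (D3 + 1) → G) (hσ : IsGeodesic ψ σ) (hσ0 : σ 0 = y)
    (hσl : σ (Fin.last D3) = z) :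
    ∃ i : Fin (D3 + 1), wdist ψ x (σ i) ≤ s + 2 * δ' := by
  have hD3 : wdist ψ y z = D3 := by rw [← hσ0, ← hσl]; exact hσ.2
  by_cases hcase : D3 < wdist ψ y x
  · refine ⟨Fin.last D3, ?_⟩
    rw [hσl]
    omega
  push_neg at hcase
  obtain ⟨p₁, hp₁, hp₁0, hp₁l⟩ := exists_geodesic ψ hs y x
  obtain ⟨p₂, hp₂, hp₂0, hp₂l⟩ := exists_geodesic ψ hs x z
  have hr : IsGeodesic ψ (σ ∘ Fin.rev) := isGeodesic_rev ψ hσ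
  have hmatch1 : p₁ (Fin.last _) = p₂ 0 := by rw [hp₁l, hp₂0]
  have hmatch2 : p₂ (Fin.last _) = (σ ∘ Fin.rev) 0 := by
    simp only [Function.comp, Fin.rev_zero]; rw [hp₂l, hσl]
  have hmatch3 : (σ ∘ Fin.rev) (Fin.last D3) = p₁ 0 := by
    simp only [Function.comp, Fin.rev_last]; rw [hp₁0, hσ0]
  obtain ⟨-, -, hthin⟩ := hyp _ _ _ p₁ p₂ (σ ∘ Fin.rev) hp₁ hp₂ hr hmatch1 hmatch2 hmatch3
  set iA : Fin (D3 + 1) := ⟨wdist ψ y x, by omega⟩ with hiA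
  obtain ⟨a, ha, hda⟩ := hthin iA.rev
  have hrev : (σ ∘ Fin.rev) iA.rev = σ iA := by simp [Function.comp, Fin.rev_rev]
  rw [hrev] at hda
  have hda' : wdist ψ (σ iA) a ≤ δ' := by exact_mod_cast hda.trans hδ
  obtain ⟨hposA, hposA'⟩ := geodesic_pos ψ hs hσ iA
  rw [hσ0] at hposA
  rw [hσl] at hposA'
  have hiAval : (iA : ℕ) = wdist ψ y x := rfl
  rw [hiAval] at hposA hposA'
  refine ⟨iA, ?_⟩
  rcases ha with h | h
  · obtain ⟨i, rfl⟩ := h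
    obtain ⟨hq1, hq2⟩ := geodesic_pos ψ hs hp₁ i
    rw [hp₁0] at hq1
    rw [hp₁l] at hq2
    have e1 : wdist ψ y (σ iA) ≤ wdist ψ y (p₁ i) + wdist ψ (p₁ i) (σ iA) :=
      wdist_triangle ψ hs _ _ _
    have e2 : wdist ψ (p₁ i) (σ iA) = wdist ψ (σ iA) (p₁ i) := wdist_comm ψ _ _
    have e3 : wdist ψ x (σ iA) ≤ wdist ψ x (p₁ i) + wdist ψ (p₁ i) (σ iA) :=
      wdist_triangle ψ hs _ _ _
    have e4 : wdist ψ x (p₁ i) = wdist ψ (p₁ i) x := wdist_comm ψ _ _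
    omega
  · obtain ⟨i, rfl⟩ := h
    obtain ⟨hq1, hq2⟩ := geodesic_pos ψ hs hp₂ i
    rw [hp₂0] at hq1
    rw [hp₂l] at hq2
    have e1 : wdist ψ (σ iA) z ≤ wdist ψ (σ iA) (p₂ i) + wdist ψ (p₂ i) z :=
      wdist_triangle ψ hs _ _ _
    have e3 : wdist ψ x (σ iA) ≤ wdist ψ x (p₂ i) + wdist ψ (p₂ i) (σ iA) :=
      wdist_triangle ψ hs _ _ _
    have e2 : wdist ψ (p₂ i) (σ iA) = wdist ψ (σ iA) (p₂ i) := wdist_comm ψ _ _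
    omega

lemma exists_defect {δ : ℝ} (hyp : HypConst ψ δ) (hs : Surjective ψ) {δ' s q N : ℕ}
    (hδ : δ ≤ (δ' : ℝ)) (hq : 4 * s + 6 * δ' + 1 ≤ q)
    (g : ℕ → G) (hg0 : g 0 = 1) (hgN : g N = 1)
    (hstep : ∀ i, i < N → wdist ψ (g i) (g (i + 1)) ≤ 1) (hN : q ≤ N) :
    ∃ i j, i ≤ j ∧ j ≤ N ∧ j - i ≤ 2 * q ∧ wdist ψ (g i) (g j) + s + 1 ≤ j - i := by
  by_contra hcon
  push_neg at hcon
  have hwin : ∀ i j, i ≤ j → j ≤ N → j - i ≤ 2 * q → j - i ≤ wdist ψ (g i) (g j) + s := by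
    intro i j h1 h2 h3
    have := hcon i j h1 h2 h3
    omega
  have hchain : ∀ i j, i ≤ j → j ≤ N → wdist ψ (g i) (g j) ≤ j - i := by
    intro i j h1 h2
    have := wdist_chain ψ hs g N hstep i (j - i) (by omega)
    rwa [show i + (j - i) = j by omega] at this
  obtain ⟨t, htmem, htmax⟩ := Finset.exists_max_image (Finset.range (N + 1))
      (fun i => wdist ψ 1 (g i)) ⟨0, by simp⟩
  rw [Finset.mem_range] at htmem
  set D := wdist ψ 1 (g t) with hD
  have hmax : ∀ i, i ≤ N → wdist ψ 1 (g i) ≤ D :=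
    fun i hi => htmax i (Finset.mem_range.mpr (by omega))
  set t' := t - q with ht'
  set t'' := min (t + q) N with ht''
  have hb1 : t' ≤ t := by omega
  have hb2 : t ≤ t'' := by omega
  have hb3 : t'' ≤ N := by omega
  have hd1low : t - t' ≤ wdist ψ (g t') (g t) + s := hwin t' t hb1 (by omega) (by omega)
  have hd2low : t'' - t ≤ wdist ψ (g t) (g t'') + s := hwin t t'' hb2 hb3 (by omega)
  have hd1up : wdist ψ (g t') (g t) ≤ t - t' := hchain t' t hb1 (by omega)
  have hd2up : wdist ψ (g t) (g t'') ≤ t'' - t := hchain t t'' hb2 hb3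
  have htautpre : t'' - t' ≤ wdist ψ (g t') (g t'') + s := hwin t' t'' (by omega) hb3 (by omega)
  have htaut : wdist ψ (g t') (g t) + wdist ψ (g t) (g t'') ≤ wdist ψ (g t') (g t'') + s := by
    omega
  obtain ⟨σ, hσ, hσ0, hσl⟩ := exists_geodesic ψ hs (g t') (g t'')
  obtain ⟨iA, hiA⟩ := taut_near ψ hyp hs hδ htaut σ hσ hσ0 hσl
  obtain ⟨α, hα, hα0, hαl⟩ := exists_geodesic ψ hs 1 (g t')
  obtain ⟨β, hβ, hβ0, hβl⟩ := exists_geodesic ψ hs (g t'') 1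
  have hm1 : α (Fin.last _) = σ 0 := by rw [hαl, hσ0]
  have hm2 : σ (Fin.last _) = β 0 := by rw [hσl, hβ0]
  have hm3 : β (Fin.last _) = α 0 := by rw [hβl, hα0]
  obtain ⟨-, hthin, -⟩ := hyp _ _ _ α σ β hα hσ hβ hm1 hm2 hm3
  obtain ⟨a, ha, hda⟩ := hthin iA
  have hda' : wdist ψ (σ iA) a ≤ δ' := by exact_mod_cast hda.trans hδ
  have hxa : wdist ψ (g t) a ≤ s + 3 * δ' := by
    have h0 := wdist_triangle ψ hs (g t) (σ iA) a
    omega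
  have hDy : wdist ψ 1 (g t') ≤ D := hmax t' (by omega)
  have hDz : wdist ψ 1 (g t'') ≤ D := hmax t'' hb3
  have key : t - t' ≤ 3 * s + 6 * δ' ∨ t'' - t ≤ 3 * s + 6 * δ' := by
    rcases ha with h | h
    · obtain ⟨i, rfl⟩ := h
      right
      obtain ⟨hpos1, hpos2⟩ := geodesic_pos ψ hs hβ i
      rw [hβ0] at hpos1
      rw [hβl] at hpos2
      have e1 : wdist ψ (g t'') 1 = wdist ψ 1 (g t'') := wdist_comm ψ _ _
      have e2 : wdist ψ (g t) (g t'') ≤ wdist ψ (g t) (β i) + wdist ψ (β i) (g t'') :=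
        wdist_triangle ψ hs _ _ _
      have e3 : wdist ψ (β i) (g t'') = wdist ψ (g t'') (β i) := wdist_comm ψ _ _
      have e5 : wdist ψ 1 (g t) ≤ wdist ψ 1 (β i) + wdist ψ (β i) (g t) :=
        wdist_triangle ψ hs _ _ _
      have e6 : wdist ψ 1 (β i) = wdist ψ (β i) 1 := wdist_comm ψ _ _
      have e7 : wdist ψ (β i) (g t) = wdist ψ (g t) (β i) := wdist_comm ψ _ _
      omega
    · obtain ⟨i, rfl⟩ := h
      left
      obtain ⟨hpos1, hpos2⟩ := geodesic_pos ψ hs hα i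
      rw [hα0] at hpos1
      rw [hαl] at hpos2
      have e2 : wdist ψ (g t') (g t) ≤ wdist ψ (g t') (α i) + wdist ψ (α i) (g t) :=
        wdist_triangle ψ hs _ _ _
      have e3 : wdist ψ (g t') (α i) = wdist ψ (α i) (g t') := wdist_comm ψ _ _
      have e5 : wdist ψ 1 (g t) ≤ wdist ψ 1 (α i) + wdist ψ (α i) (g t) :=
        wdist_triangle ψ hs _ _ _
      have e7 : wdist ψ (α i) (g t) = wdist ψ (g t) (α i) := wdist_comm ψ _ _
      omega
  have h1 : D ≤ t := by
    have := hchain 0 t (by omega) (by omega)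
    rw [hg0] at this
    omega
  have h2 : D ≤ N - t := by
    have := hchain t N (by omega) (le_refl N)
    rw [hgN] at this
    have e := wdist_comm ψ (g t) 1
    omega
  have hDsmall : D ≤ 3 * s + 6 * δ' := by
    rcases key with h | h <;> omega
  have hfin : q ≤ wdist ψ (g 0) (g q) + s := hwin 0 q (by omega) (by omega) (by omega)
  have hfin2 : wdist ψ (g 0) (g q) ≤ D := by rw [hg0]; exact hmax q (by omega)
  omega


variable {R : Set (FreeGroup ι)}

lemma areaLe_one_zero : AreaLe R 1 0 := ⟨[], rfl, by simp, by simp⟩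

lemma areaLe_succ (h1 : (1 : FreeGroup ι) ∈ R) {w : FreeGroup ι} {l : ℕ}
    (h : AreaLe R w l) : AreaLe R w (l + 1) := by
  obtain ⟨L, hL, hmem, hprod⟩ := h
  refine ⟨(1, 1) :: L, by simp [hL], ?_, by simp [hprod]⟩
  intro p hp
  rcases List.mem_cons.mp hp with rfl | hp
  · left; exact h1
  · exact hmem p hp

lemma areaLe_mono (h1 : (1 : FreeGroup ι) ∈ R) {w : FreeGroup ι} {l l' : ℕ}
    (h : AreaLe R w l) (hle : l ≤ l') : AreaLe R w l' := by
  obtain ⟨c, rfl⟩ := Nat.exists_eq_add_of_le hle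
  clear hle
  induction c with
  | zero => exact h
  | succ c ih => exact (show l + (c+1) = (l + c) + 1 by omega) ▸ areaLe_succ h1 ih

lemma areaLe_single {w : FreeGroup ι} (hw : w ∈ R) : AreaLe R w 1 := by
  refine ⟨[(1, w)], rfl, ?_, by simp⟩
  intro p hp
  rcases List.mem_cons.mp hp with rfl | hp
  · left; exact hw
  · simp at hp

lemma areaLe_step {w w' r c : FreeGroup ι} {l : ℕ} (hr : r ∈ R)
    (hw : w = c⁻¹ * r * c * w') (h : AreaLe R w' l) : AreaLe R w (l + 1) := by
  obtain ⟨L, hL, hmem, hprod⟩ := h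
  refine ⟨(c, r) :: L, by simp [hL], ?_, ?_⟩
  · intro p hp
    rcases List.mem_cons.mp hp with rfl | hp
    · left; exact hr
    · exact hmem p hp
  · simp only [List.map_cons, List.prod_cons, ← hprod]
    exact hw

lemma main_area (hs : Surjective ψ) {δ : ℝ} (hyp : HypConst ψ δ) {δ' s q : ℕ}
    (hδ : δ ≤ (δ' : ℝ)) (hq : 4 * s + 6 * δ' + 1 ≤ q)
    {S : Set (FreeGroup ι)} (hS : ∀ r, wnorm r ≤ 4 * q → ψ r = 1 → r ∈ S) :
    ∀ n w, wnorm w ≤ n → ψ w = 1 → AreaLe S w (n / (s + 1) + 1) := by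
  have h1S : (1 : FreeGroup ι) ∈ S := hS 1 (by simp [wnorm_one]) (map_one ψ)
  intro n
  induction n using Nat.strong_induction_on with
  | _ n IH =>
  intro w hw hψw
  by_cases hw1 : w = 1
  · subst hw1; exact areaLe_mono h1S areaLe_one_zero (Nat.zero_le _)
  letI : DecidableEq ι := Classical.decEq ι
  have hN0 : 0 < wnorm w := by
    rcases Nat.eq_zero_or_pos (wnorm w) with h | h
    · exact absurd (wnorm_eq_zero.mp h) hw1
    · exact h
  set N := wnorm w with hN
  by_cases hsmall : N < q
  · exact areaLe_mono h1S (areaLe_single (hS w (by omega) hψw))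
      (Nat.succ_le_succ (Nat.zero_le _))
  push_neg at hsmall
  set L := FreeGroup.toWord w with hLdef
  have hLlen : L.length = N := rfl
  set g : ℕ → G := fun i => ψ (FreeGroup.mk (L.take i)) with hgdef
  have hg0 : g 0 = 1 := by
    simp only [hgdef, List.take_zero, ← FreeGroup.one_eq_mk, map_one]
  have hgN : g N = 1 := by
    simp only [hgdef, ← hLlen, List.take_length]
    rw [hLdef, FreeGroup.mk_toWord, hψw]
  have hstep : ∀ i, i < N → wdist ψ (g i) (g (i + 1)) ≤ 1 := by
    intro i hi
    have hmk : FreeGroup.mk (L.take (i + 1)) =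
        FreeGroup.mk (L.take i) * FreeGroup.mk ((L[i]?).toList) := by
      rw [List.take_succ, FreeGroup.mul_mk]
    have himg : ψ (FreeGroup.mk ((L[i]?).toList)) = (g i)⁻¹ * g (i + 1) := by
      simp only [hgdef, hmk, map_mul]
      group
    refine le_trans (wdist_le_wnorm ψ himg) (le_trans (wnorm_mk_le _) ?_)
    cases (L[i]?) <;> simp
  obtain ⟨i, j, hij, hjN, hwin, hdef⟩ :=
    exists_defect ψ hyp hs hδ hq g hg0 hgN hstep hsmall
  set a := FreeGroup.mk (L.take i) with ha
  set u := FreeGroup.mk ((L.take j).drop i) with hu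
  set b := FreeGroup.mk (L.drop j) with hb
  have hab : a * u = FreeGroup.mk (L.take j) := by
    rw [ha, hu, FreeGroup.mul_mk]
    congr 1
    conv_rhs => rw [← List.take_append_drop i (L.take j)]
    rw [List.take_take, Nat.min_eq_left hij]
  have hw_eq : a * u * b = w := by
    rw [hab, hb, FreeGroup.mul_mk, List.take_append_drop, hLdef, FreeGroup.mk_toWord]
  have hψu : ψ u = (g i)⁻¹ * g j := by
    have h1 : ψ a * ψ u = g j := by
      rw [← map_mul, hab]
    have h2 : ψ a = g i := rfl
    rw [← h1, h2]
    group
  obtain ⟨v, hv1, hv2⟩ := exists_wlen_word ψ hs ((g i)⁻¹ * g j)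
  have hvn : wnorm v + (s + 1) ≤ j - i := by
    rw [hv1]
    exact hdef
  have hun : wnorm u ≤ j - i := by
    refine le_trans (wnorm_mk_le _) ?_
    simp only [List.length_drop, List.length_take, hLlen]
    omega
  have han : wnorm a ≤ i := by
    refine le_trans (wnorm_mk_le _) ?_
    simp only [List.length_take, hLlen]
    omega
  have hbn : wnorm b ≤ N - j := by
    refine le_trans (wnorm_mk_le _) ?_
    simp only [List.length_drop, hLlen]
    exact le_refl _
  have hrψ : ψ (u * v⁻¹) = 1 := by
    rw [map_mul, map_inv, hψu, hv2]
    group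
  have hrn : wnorm (u * v⁻¹) ≤ 4 * q := by
    refine le_trans (wnorm_mul_le _ _) ?_
    rw [wnorm_inv]
    omega
  have hrS : (u * v⁻¹) ∈ S := hS _ hrn hrψ
  have hw'ψ : ψ (a * (v * b)) = 1 := by
    have : ψ v = ψ u := by rw [hv2, hψu]
    rw [map_mul, map_mul, this, ← map_mul, ← map_mul, ← mul_assoc, hw_eq, hψw]
  have hw'n : wnorm (a * (v * b)) + (s + 1) ≤ N := by
    have h1 := wnorm_mul_le a (v * b)
    have h2 := wnorm_mul_le v b
    omega
  have hdecomp : w = (a⁻¹)⁻¹ * (u * v⁻¹) * a⁻¹ * (a * (v * b)) := by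
    rw [← hw_eq]
    group
  have hsn : s + 1 ≤ n := by omega
  have IH' := IH (n - (s + 1)) (by omega) (a * (v * b)) (by omega) hw'ψ
  have hA : AreaLe S w ((n - (s + 1)) / (s + 1) + 1 + 1) := areaLe_step hrS hdecomp IH'
  refine areaLe_mono h1S hA ?_
  have hdiv : (n - (s + 1) + (s + 1)) / (s + 1) = (n - (s + 1)) / (s + 1) + 1 :=
    Nat.add_div_right _ (Nat.succ_pos s)
  rw [show n - (s + 1) + (s + 1) = n by omega] at hdiv
  omega


lemma isoSpec_le_of (φ : FreeGroup ι →* G) {N : Subgroup (FreeGroup ι)} [hNn : N.Normal]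
    {δ : ℝ} (hyp : HypConst (QuotientGroup.mk' N) δ) {δ' : ℕ} (hδ : δ ≤ (δ' : ℝ))
    (hker : ∀ x ∈ N, φ x = 1) (k m n : ℕ)
    (hsub : triv φ k ⊆ (N : Set (FreeGroup ι)))
    (hm : 48 * δ' + 200 ≤ m) (hn : 0 < n) :
    (isoSpec φ k m n : ℝ) ≤ 32 * n / m + 1 := by
  set ψ := QuotientGroup.mk' N with hψdef
  have hs : Surjective ψ := QuotientGroup.mk'_surjective N
  set s := m / 32 with hsdef
  set q := m / 4 with hqdef
  have hq : 4 * s + 6 * δ' + 1 ≤ q := by omega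
  have hS : ∀ r, wnorm r ≤ 4 * q → ψ r = 1 → r ∈ triv φ m := by
    intro r h1 h2
    have hrN : r ∈ N := by
      rw [hψdef, QuotientGroup.mk'_apply] at h2
      exact (QuotientGroup.eq_one_iff r).mp h2
    exact ⟨by omega, hker r hrN⟩
  have harea := main_area ψ hs hyp hδ hq hS
  have hbound : ∀ x ∈ area (triv φ m) ''
      {w | w ∈ Subgroup.normalClosure (triv φ k) ∧ wnorm w ≤ n}, x ≤ n / (s + 1) + 1 := by
    rintro x ⟨w, ⟨hwmem, hwn⟩, rfl⟩
    have hψw : ψ w = 1 := by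
      have hwN : w ∈ N := Subgroup.normalClosure_le_normal hsub hwmem
      rw [hψdef, QuotientGroup.mk'_apply]
      exact (QuotientGroup.eq_one_iff w).mpr hwN
    exact Nat.sInf_le (harea n w hwn hψw)
  have hne : (area (triv φ m) ''
      {w | w ∈ Subgroup.normalClosure (triv φ k) ∧ wnorm w ≤ n}).Nonempty :=
    ⟨area (triv φ m) 1, 1, ⟨Subgroup.one_mem _, by rw [wnorm_one]; omega⟩, rfl⟩
  have hsup : isoSpec φ k m n ≤ n / (s + 1) + 1 := csSup_le hne hbound
  have hm0 : (0:ℝ) < m := by exact_mod_cast (by omega : 0 < m)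
  have hs1 : (0:ℝ) < (s:ℝ) + 1 := by positivity
  have hms : (m:ℝ) ≤ 32 * ((s:ℝ) + 1) := by exact_mod_cast (by omega : m ≤ 32 * (s + 1))
  have hn0 : (0:ℝ) ≤ (n:ℝ) := by positivity
  calc (isoSpec φ k m n : ℝ) ≤ ((n / (s + 1) + 1 : ℕ) : ℝ) := by exact_mod_cast hsup
    _ ≤ (n:ℝ) / ((s:ℝ) + 1) + 1 := by
        push_cast
        have h := Nat.cast_div_le (α := ℝ) (m := n) (n := s + 1)
        push_cast at h
        linarith
    _ ≤ 32 * n / m + 1 := by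
        have h1 : (n:ℝ) / ((s:ℝ) + 1) ≤ 32 * n / m := by
          rw [div_le_div_iff₀ hs1 hm0]
          nlinarith
        linarith

lemma mem_normalClosure_iUnion {F : Type*} [Group F] {R : ℕ → Set F}
    (hmono : ∀ i j, i ≤ j → R i ⊆ R j) {x : F}
    (hx : x ∈ Subgroup.normalClosure (⋃ i, R i)) :
    ∃ i, x ∈ Subgroup.normalClosure (R i) := by
  refine Subgroup.closure_induction
    (p := fun x _ => ∃ i, x ∈ Subgroup.normalClosure (R i)) ?_ ?_ ?_ ?_ hx
  · intro y hy
    obtain ⟨c, hc, hconj⟩ := Group.mem_conjugatesOfSet_iff.mp hy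
    obtain ⟨i, hci⟩ := Set.mem_iUnion.mp hc
    exact ⟨i, Subgroup.conjugatesOfSet_subset_normalClosure
      (Group.mem_conjugatesOfSet_iff.mpr ⟨c, hci, hconj⟩)⟩
  · exact ⟨0, Subgroup.one_mem _⟩
  · rintro u v _ _ ⟨i, hi⟩ ⟨j, hj⟩
    exact ⟨max i j, Subgroup.mul_mem _
      (Subgroup.normalClosure_mono (hmono i (max i j) (le_max_left _ _)) hi)
      (Subgroup.normalClosure_mono (hmono j (max i j) (le_max_right _ _)) hj)⟩
  · rintro u _ ⟨i, hi⟩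
    exact ⟨i, Subgroup.inv_mem _ hi⟩

lemma triv_finite {a : ℕ} (φ : FreeGroup (Fin a) →* G) (k : ℕ) : (triv φ k).Finite := by
  letI : DecidableEq (Fin a) := Classical.decEq _
  have hsubset : triv φ k ⊆ FreeGroup.toWord ⁻¹' {l : List (Fin a × Bool) | l.length ≤ k} :=
    fun w hw => hw.1
  exact (Set.Finite.preimage (Function.Injective.injOn FreeGroup.toWord_injective)
    (List.finite_length_le _ k)).subset hsubset


end Aux

/-- If `G` is a limit of hyperbolic groups, then (a) for every `k`
there is `M(k)` with `f_{G,X}(k,m,n) ≤ 400⌈n/m⌉` for all `m ≥ M`; and (b) if `G` is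
well-approximated by hyperbolic groups then `f_{G,X}(k,m,n) ∼ n/m`. -/
theorem isoSpec_of_limitOfHyperbolic {G : Type} [Group G] {a : ℕ}
    (φ : FreeGroup (Fin a) →* G) (hlim : LimitOfHyperbolic φ) :
    (∀ k : ℕ, 0 < k → ∃ M : ℕ, ∀ m n : ℕ, M ≤ m → 0 < n →
      isoSpecR φ k m n ≤ 400 * (⌈(n : ℝ) / (m : ℝ)⌉₊ : ℝ)) ∧
    (WellApproximated φ → SpecEquiv (isoSpecR φ) linSpec) := by
  constructor
  · intro k hk
    obtain ⟨hφs, R, hmono, hker, hhyp⟩ := hlim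
    have hfin := triv_finite φ k
    have hexists : ∀ w ∈ triv φ k, ∃ i, w ∈ Subgroup.normalClosure (R i) := by
      intro w hw
      have hw2 : w ∈ φ.ker := MonoidHom.mem_ker.mpr hw.2
      rw [hker] at hw2
      exact mem_normalClosure_iUnion hmono hw2
    choose f hf using hexists
    classical
    set I := hfin.toFinset.sup (fun w => if h : w ∈ triv φ k then f w h else 0) with hI
    have hsub : triv φ k ⊆ (Subgroup.normalClosure (R I) : Set (FreeGroup (Fin a))) := by
      intro w hw
      have h1 : f w hw ≤ I := by
        have h0 := Finset.le_sup (s := hfin.toFinset)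
          (f := fun w => if h : w ∈ triv φ k then f w h else 0)
          (hfin.mem_toFinset.mpr hw)
        simpa [dif_pos hw] using h0
      exact Subgroup.normalClosure_mono (hmono _ _ h1) (hf w hw)
    obtain ⟨δ, hδ0, hyp⟩ := hhyp I
    set δ' := ⌈δ⌉₊ with hδ'
    have hδle : δ ≤ (δ' : ℝ) := Nat.le_ceil δ
    have hkerN : ∀ x ∈ Subgroup.normalClosure (R I), φ x = 1 := by
      intro x hx
      have hx2 : x ∈ φ.ker := by
        rw [hker]
        exact Subgroup.normalClosure_mono (Set.subset_iUnion R I) hx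
      exact MonoidHom.mem_ker.mp hx2
    refine ⟨48 * δ' + 200, ?_⟩
    intro m n hm hn
    have hb := isoSpec_le_of φ hyp hδle hkerN k m n hsub hm hn
    have hm0 : (0:ℝ) < m := by exact_mod_cast (by omega : 0 < m)
    have hn0 : (0:ℝ) < n := by exact_mod_cast hn
    have hc0 : (0:ℝ) < (n:ℝ)/m := div_pos hn0 hm0
    have hc1 : (1:ℝ) ≤ (⌈(n:ℝ)/(m:ℝ)⌉₊ : ℝ) := by exact_mod_cast Nat.ceil_pos.mpr hc0
    have hc2 : (n:ℝ)/m ≤ (⌈(n:ℝ)/(m:ℝ)⌉₊ : ℝ) := Nat.le_ceil _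
    simp only [isoSpecR]
    rw [show (32:ℝ) * n / m = 32 * ((n:ℝ)/m) by ring] at hb
    linarith
  · intro hwa
    obtain ⟨hφs, R, hmono, hker, hhyp, C₀, hC₀, hcond⟩ := hwa
    constructor
    · refine ⟨1000 * (C₀ + 1), by positivity, ?_⟩
      intro k m n hk hm hn hkm
      set C := 1000 * (C₀ + 1) with hC
      obtain ⟨hink, hypk⟩ := hcond k hk
      have hsub : triv φ k ⊆ (Subgroup.normalClosure (R k) : Set (FreeGroup (Fin a))) :=
        fun w hw => hink w hw.1 hw.2
      have hkerN : ∀ x ∈ Subgroup.normalClosure (R k), φ x = 1 := by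
        intro x hx
        have hx2 : x ∈ φ.ker := by
          rw [hker]
          exact Subgroup.normalClosure_mono (Set.subset_iUnion R k) hx
        exact MonoidHom.mem_ker.mp hx2
      have hδle : ((C₀ * k : ℕ) : ℝ) ≤ ((C₀ * k : ℕ) : ℝ) := le_refl _
      have hm' : 48 * (C₀ * k) + 200 ≤ C * m := by
        have h3 : 48 * (C₀ * k) + 200 ≤ C * k := by
          have he : C * k = 1000 * (C₀ * k) + 1000 * k := by rw [hC]; ring
          omega
        have h5 : m ≤ C * m := Nat.le_mul_of_pos_left m (by omega)
        omega
      have hb := isoSpec_le_of φ hypk hδle hkerN k (C * m) n hsub hm' hn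
      simp only [isoSpecR, linSpec]
      have hm0 : (0:ℝ) < m := by exact_mod_cast hm
      have hC1 : (1:ℝ) ≤ (C:ℝ) := by exact_mod_cast (by omega : 1 ≤ C)
      have h32 : (32:ℝ) ≤ (C:ℝ) := by exact_mod_cast (by omega : 32 ≤ C)
      have hn0 : (0:ℝ) ≤ (n:ℝ) := by positivity
      have h1 : 32 * (n:ℝ) / ((C * m : ℕ):ℝ) ≤ (n:ℝ)/m := by
        push_cast
        rw [div_le_div_iff₀ (by positivity) hm0]
        clear hC
        nlinarith [mul_nonneg (mul_nonneg (sub_nonneg.mpr h32) hn0) hm0.le]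
      have h2 : (0:ℝ) ≤ (C:ℝ) * (((C * n : ℕ):ℝ) / (m:ℝ)) := by positivity
      have h4 : (n:ℝ)/m ≤ (C:ℝ) * (n:ℝ)/m := by
        rw [show (C:ℝ) * (n:ℝ)/m = (C:ℝ) * ((n:ℝ)/m) by ring]
        clear hC
        nlinarith [div_nonneg hn0 hm0.le]
      linarith [hb, h1, h2, h4, hC1]
    · refine ⟨1, one_pos, ?_⟩
      intro k m n hk hm hn hkm
      have hiso := Nat.cast_nonneg (α := ℝ) (isoSpec φ (1 * k) m (1 * n))
      have hm0 : (0:ℝ) < m := by exact_mod_cast hm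
      have hd : (0:ℝ) ≤ (n:ℝ)/m := by positivity
      simp only [linSpec, isoSpecR, one_mul, Nat.cast_one]
      linarith


end IsoSpecPaper
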